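/- Let H be a complex Hilbert space, A a commutative unital C*-subalgebra of B(H), and T ∈ B(H) an isometry satisfying axioms (A1) and (A2) with endomorphism α. The following are equivalent: (1) T is unitary; (2) aT is invertible in B(H) for some a ∈ A; (3) α is an automorphism of A (a bijective endomorphism) and axiom (A3) holds; (4) T is unitary and {T*aT : a ∈ A} = A. Consequently, if T is not invertible, then no operator aT with a ∈ A is invertible. -/

import Mathlib

open ContinuousLinearMap MeasureTheory

set_option maxHeartbeats 1000000

section Aux

variable {H : Type*} [NormedAddCommGroup H] [InnerProductSpace ℂ H] [CompleteSpace H]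

/-- A normal operator bounded below is invertible. -/
private lemma normal_bdd_below_isUnit (b : H →L[ℂ] H) (c : ℝ) (hc : 0 < c)
    (hbdd : ∀ x, c * ‖x‖ ≤ ‖b x‖)
    (hnorm : b * adjoint b = adjoint b * b) : IsUnit b := by
  have hanti : AntilipschitzWith (⟨c, hc.le⟩ : NNReal)⁻¹ b := by
    refine AntilipschitzWith.of_le_mul_dist fun x y => ?_
    have h := hbdd (x - y)
    rw [map_sub] at h
    rw [dist_eq_norm, dist_eq_norm]
    calc ‖x - y‖ = c⁻¹ * (c * ‖x - y‖) := by field_simp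
    _ ≤ c⁻¹ * ‖b x - b y‖ := mul_le_mul_of_nonneg_left h (by positivity)
    _ = ((⟨c, hc.le⟩ : NNReal)⁻¹ : NNReal) * ‖b x - b y‖ := by
        exact congrArg (· * ‖b x - b y‖) (NNReal.coe_inv ⟨c, hc.le⟩).symm
  have hker : LinearMap.ker (b : H →ₗ[ℂ] H) = ⊥ := (LinearMap.ker_eq_bot (f := (b : H →ₗ[ℂ] H))).mpr hanti.injective
  have hstar : ∀ x, ‖adjoint b x‖ = ‖b x‖ := by
    intro x
    have h1 : ‖adjoint b x‖ ^ 2 = ‖b x‖ ^ 2 := by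
      rw [apply_norm_sq_eq_inner_adjoint_left, apply_norm_sq_eq_inner_adjoint_left,
        adjoint_adjoint, ← ContinuousLinearMap.mul_def, ← ContinuousLinearMap.mul_def, hnorm]
    exact (sq_eq_sq₀ (norm_nonneg _) (norm_nonneg _)).mp h1
  set K : Submodule ℂ H := LinearMap.range (b : H →ₗ[ℂ] H) with hK
  have hclosed : IsClosed (K : Set H) := by
    rw [hK, LinearMap.coe_range]
    exact hanti.isClosed_range b.uniformContinuous
  haveI : CompleteSpace K := hclosed.completeSpace_coe
  have horth : Kᗮ = ⊥ := by
    rw [Submodule.eq_bot_iff]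
    intro x hx
    have hbx : adjoint b x = 0 := by
      rw [← inner_self_eq_zero (𝕜 := ℂ), adjoint_inner_right]
      exact (Submodule.mem_orthogonal K x).mp hx _ (LinearMap.mem_range_self _ _)
    have h0 : ‖b x‖ = 0 := by rw [← hstar, hbx, norm_zero]
    have hbx0 : c * ‖x‖ ≤ 0 := h0 ▸ hbdd x
    exact norm_eq_zero.mp
      (le_antisymm (nonpos_of_mul_nonpos_right hbx0 hc) (norm_nonneg x))
  have hrange : LinearMap.range (b : H →ₗ[ℂ] H) = ⊤ := Submodule.orthogonal_eq_bot_iff.mp horth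
  let e := ContinuousLinearEquiv.ofBijective b hker hrange
  have he : ⇑e = ⇑b := ContinuousLinearEquiv.coeFn_ofBijective b hker hrange
  have h1 : b * (e.symm : H →L[ℂ] H) = 1 := by
    ext x
    simp only [ContinuousLinearMap.mul_apply, ContinuousLinearMap.one_apply,
      ContinuousLinearEquiv.coe_coe]
    rw [← he]
    exact e.apply_symm_apply x
  have h2 : (e.symm : H →L[ℂ] H) * b = 1 := by
    ext x
    simp only [ContinuousLinearMap.mul_apply, ContinuousLinearMap.one_apply,
      ContinuousLinearEquiv.coe_coe]
    rw [← he]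
    exact e.symm_apply_apply x
  exact ⟨⟨b, (e.symm : H →L[ℂ] H), h1, h2⟩, rfl⟩

/-- An invertible operator is bounded below (when `H` is nontrivial). -/
private lemma isUnit_bdd_below [Nontrivial H] (f : H →L[ℂ] H) (hf : IsUnit f) :
    ∃ c : ℝ, 0 < c ∧ ∀ x, c * ‖x‖ ≤ ‖f x‖ := by
  obtain ⟨u, hu⟩ := hf
  set g : H →L[ℂ] H := ↑u⁻¹ with hg
  have hgf : g * f = 1 := by rw [hg, ← hu]; exact u.inv_mul
  have hgne : g ≠ 0 := by
    intro h
    have h1 : (1 : H →L[ℂ] H) = 0 := by rw [← hgf, h, zero_mul]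
    obtain ⟨x, hx⟩ := exists_ne (0 : H)
    exact hx (by simpa using congrFun (congrArg DFunLike.coe h1) x)
  have hgpos : 0 < ‖g‖ := norm_pos_iff.mpr hgne
  refine ⟨‖g‖⁻¹, by positivity, fun x => ?_⟩
  have hx : g (f x) = x := by
    rw [← ContinuousLinearMap.mul_apply, hgf, ContinuousLinearMap.one_apply]
  have : ‖x‖ ≤ ‖g‖ * ‖f x‖ := by
    calc ‖x‖ = ‖g (f x)‖ := by rw [hx]
    _ ≤ ‖g‖ * ‖f x‖ := g.le_opNorm _
  rw [inv_mul_le_iff₀ hgpos]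
  linarith [this]

/-- Norm bound for the adjoint of an isometry. -/
private lemma adjoint_isometry_norm_le (T : H →L[ℂ] H) (hT : adjoint T * T = 1) :
    ∀ y, ‖adjoint T y‖ ≤ ‖y‖ := by
  have hnormT : ∀ x, ‖T x‖ = ‖x‖ := T.norm_map_iff_adjoint_comp_self.mpr hT
  intro y
  calc ‖adjoint T y‖ ≤ ‖adjoint T‖ * ‖y‖ := (adjoint T).le_opNorm y
  _ = ‖T‖ * ‖y‖ := by rw [LinearIsometryEquiv.norm_map ContinuousLinearMap.adjoint T]
  _ ≤ 1 * ‖y‖ := by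
      have : ‖T‖ ≤ 1 := T.opNorm_le_bound zero_le_one (fun x => by rw [hnormT, one_mul])
      exact mul_le_mul_of_nonneg_right this (norm_nonneg y)
  _ = ‖y‖ := one_mul ‖y‖

/-- A surjective isometry is unitary. -/
private lemma isometry_surj_unitary (T : H →L[ℂ] H) (hT : adjoint T * T = 1)
    (hsurj : Function.Surjective T) : T ∈ unitary (H →L[ℂ] H) := by
  rw [Unitary.mem_iff, star_eq_adjoint]
  refine ⟨hT, ?_⟩
  ext x
  obtain ⟨y, rfl⟩ := hsurj x
  have h1 : adjoint T (T y) = y := by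
    rw [← ContinuousLinearMap.mul_apply, hT, ContinuousLinearMap.one_apply]
  simp only [ContinuousLinearMap.mul_apply, ContinuousLinearMap.one_apply, h1]

end Aux

/-- for well behaved abstract weighted shifts, the following are
equivalent: (1) `T` is unitary; (2) some `aT` with `a ∈ A` is invertible;
(3) the endomorphism `α` from (A2) is an automorphism and (A3) holds;
(4) `T` is unitary and `T*AT = A`.  Consequently, if `T` is not invertible,
then no `aT` is invertible. -/
theorem stmt1 {H : Type*} [NormedAddCommGroup H] [InnerProductSpace ℂ H] [CompleteSpace H]
    (A : StarSubalgebra ℂ (H →L[ℂ] H)) (hA : IsClosed (A : Set (H →L[ℂ] H)))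
    (hcomm : ∀ a ∈ A, ∀ b ∈ A, a * b = b * a)
    (T : H →L[ℂ] H) (hT : adjoint T * T = 1)
    (hA1 : ∀ a ∈ A, adjoint T * a * T ∈ A)
    (α : ↥A →⋆ₐ[ℂ] ↥A)
    (hα : ∀ a : ↥A, T * (a : H →L[ℂ] H) = (α a : H →L[ℂ] H) * T) :
    ((T ∈ unitary (H →L[ℂ] H)) ↔ (∃ a : ↥A, IsUnit ((a : H →L[ℂ] H) * T))) ∧
    ((T ∈ unitary (H →L[ℂ] H)) ↔
      (Function.Bijective α ∧
        Dense (↑(Submodule.span ℂ {v : H | ∃ a ∈ A, ∃ h : H, v = a (T h)}) : Set H))) ∧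
    ((T ∈ unitary (H →L[ℂ] H)) ↔
      (T ∈ unitary (H →L[ℂ] H) ∧
        (fun b => adjoint T * b * T) '' (A : Set (H →L[ℂ] H)) = (A : Set (H →L[ℂ] H)))) ∧
    (¬ IsUnit T → ∀ a : ↥A, ¬ IsUnit ((a : H →L[ℂ] H) * T)) := by
  have hnormT : ∀ x, ‖T x‖ = ‖x‖ := T.norm_map_iff_adjoint_comp_self.mpr hT
  -- unitary → IsUnit
  have hunit_isUnit : T ∈ unitary (H →L[ℂ] H) → IsUnit T := fun h => by
    rw [Unitary.mem_iff] at h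
    exact ⟨⟨T, star T, h.2, h.1⟩, rfl⟩
  -- unitary → T * adjoint T = 1
  have hunit_TTstar : T ∈ unitary (H →L[ℂ] H) → T * adjoint T = 1 := fun h => by
    rw [Unitary.mem_iff, star_eq_adjoint] at h
    exact h.2
  -- key implication: (2) → (1)
  have key21 : (∃ a : ↥A, IsUnit ((a : H →L[ℂ] H) * T)) → T ∈ unitary (H →L[ℂ] H) := by
    rintro ⟨a, ha⟩
    rcases subsingleton_or_nontrivial H with hss | hnt
    · haveI : Subsingleton (H →L[ℂ] H) :=
        ⟨fun f g => ContinuousLinearMap.ext fun x => Subsingleton.elim _ _⟩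
      rw [Unitary.mem_iff]
      exact ⟨Subsingleton.elim _ _, Subsingleton.elim _ _⟩
    -- the adjoint (star) of a*T is also invertible and bounded below
    have hastar : IsUnit (adjoint T * adjoint (a : H →L[ℂ] H)) := by
      have := ha.star
      rwa [star_mul, star_eq_adjoint, star_eq_adjoint] at this
    obtain ⟨c, hc, hbdd⟩ := isUnit_bdd_below _ hastar
    have hTstar_le : ∀ y, ‖adjoint T y‖ ≤ ‖y‖ := adjoint_isometry_norm_le T hT
    -- adjoint a is bounded below
    have hbdd_a : ∀ x, c * ‖x‖ ≤ ‖adjoint (a : H →L[ℂ] H) x‖ := by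
      intro x
      calc c * ‖x‖ ≤ ‖(adjoint T * adjoint (a : H →L[ℂ] H)) x‖ := hbdd x
      _ = ‖adjoint T (adjoint (a : H →L[ℂ] H) x)‖ := rfl
      _ ≤ ‖adjoint (a : H →L[ℂ] H) x‖ := hTstar_le _
    -- adjoint a is normal
    have hmem : (a : H →L[ℂ] H) ∈ A := a.2
    have hmemstar : star (a : H →L[ℂ] H) ∈ A := star_mem hmem
    have hnormal : adjoint (a : H →L[ℂ] H) * adjoint (adjoint (a : H →L[ℂ] H)) =
        adjoint (adjoint (a : H →L[ℂ] H)) * adjoint (a : H →L[ℂ] H) := by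
      rw [adjoint_adjoint, ← star_eq_adjoint]
      exact hcomm _ hmemstar _ hmem
    have hua' : IsUnit (adjoint (a : H →L[ℂ] H)) :=
      normal_bdd_below_isUnit _ c hc hbdd_a hnormal
    have hua : IsUnit (a : H →L[ℂ] H) := by
      have := hua'.star
      rwa [star_eq_adjoint, adjoint_adjoint] at this
    -- T is a unit
    have hTu : IsUnit T := by
      obtain ⟨v, hv⟩ := hua
      have : T = (↑v⁻¹ : H →L[ℂ] H) * ((a : H →L[ℂ] H) * T) := by
        rw [← hv, ← mul_assoc, v.inv_mul, one_mul]
      rw [this]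
      exact (v⁻¹).isUnit.mul ha
    -- invertible isometry is unitary
    obtain ⟨w, hw⟩ := hTu
    have hTTstar : T * adjoint T = 1 := by
      have hadj : adjoint T = ↑w⁻¹ := by
        calc adjoint T = adjoint T * (T * ↑w⁻¹) := by rw [← hw, w.mul_inv, mul_one]
        _ = (adjoint T * T) * ↑w⁻¹ := by rw [mul_assoc]
        _ = ↑w⁻¹ := by rw [hT, one_mul]
      rw [hadj, ← hw, w.mul_inv]
    rw [Unitary.mem_iff, star_eq_adjoint]
    exact ⟨hT, hTTstar⟩
  -- (1) → (2)
  have key12 : T ∈ unitary (H →L[ℂ] H) → ∃ a : ↥A, IsUnit ((a : H →L[ℂ] H) * T) := by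
    intro h
    exact ⟨1, by rw [OneMemClass.coe_one, one_mul]; exact hunit_isUnit h⟩
  -- (1) → (3)
  have key13 : T ∈ unitary (H →L[ℂ] H) →
      Function.Bijective α ∧
        Dense (↑(Submodule.span ℂ {v : H | ∃ a ∈ A, ∃ h : H, v = a (T h)}) : Set H) := by
    intro h
    have hTT : T * adjoint T = 1 := hunit_TTstar h
    constructor
    · constructor
      · -- injective
        intro x y hxy
        have hx := hα x
        have hy := hα y
        have : T * (x : H →L[ℂ] H) = T * (y : H →L[ℂ] H) := by rw [hx, hy, hxy]
        have hcoe : (x : H →L[ℂ] H) = (y : H →L[ℂ] H) := by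
          calc (x : H →L[ℂ] H) = (adjoint T * T) * (x : H →L[ℂ] H) := by rw [hT, one_mul]
          _ = adjoint T * (T * (x : H →L[ℂ] H)) := by rw [mul_assoc]
          _ = adjoint T * (T * (y : H →L[ℂ] H)) := by rw [this]
          _ = (adjoint T * T) * (y : H →L[ℂ] H) := by rw [mul_assoc]
          _ = (y : H →L[ℂ] H) := by rw [hT, one_mul]
        exact Subtype.ext hcoe
      · -- surjective
        intro b
        refine ⟨⟨adjoint T * (b : H →L[ℂ] H) * T, hA1 _ b.2⟩, ?_⟩
        have h1 := hα ⟨adjoint T * (b : H →L[ℂ] H) * T, hA1 _ b.2⟩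
        have h2 : T * (adjoint T * (b : H →L[ℂ] H) * T) = (b : H →L[ℂ] H) * T := by
          rw [← mul_assoc, ← mul_assoc, hTT, one_mul]
        rw [h2] at h1
        have h3 : ((α ⟨adjoint T * (b : H →L[ℂ] H) * T, hA1 _ b.2⟩ : ↥A) : H →L[ℂ] H)
            = (b : H →L[ℂ] H) := by
          calc ((α ⟨adjoint T * (b : H →L[ℂ] H) * T, hA1 _ b.2⟩ : ↥A) : H →L[ℂ] H)
              = ((α ⟨adjoint T * (b : H →L[ℂ] H) * T, hA1 _ b.2⟩ : ↥A) : H →L[ℂ] H)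
                * (T * adjoint T) := by rw [hTT, mul_one]
          _ = ((b : H →L[ℂ] H) * T) * adjoint T := by rw [← mul_assoc, h1]
          _ = (b : H →L[ℂ] H) * (T * adjoint T) := by rw [mul_assoc]
          _ = (b : H →L[ℂ] H) := by rw [hTT, mul_one]
        exact Subtype.ext h3
    · -- dense
      have hall : ∀ v : H, v ∈ Submodule.span ℂ {v : H | ∃ a ∈ A, ∃ h : H, v = a (T h)} := by
        intro v
        apply Submodule.subset_span
        refine ⟨1, A.one_mem, adjoint T v, ?_⟩
        have : T (adjoint T v) = v := by
          rw [← ContinuousLinearMap.mul_apply, hTT, ContinuousLinearMap.one_apply]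
        rw [ContinuousLinearMap.one_apply, this]
      have : (↑(Submodule.span ℂ {v : H | ∃ a ∈ A, ∃ h : H, v = a (T h)}) : Set H)
          = Set.univ := Set.eq_univ_of_forall hall
      rw [this]
      exact dense_univ
  -- (3) → (1)
  have key31 : (Function.Bijective α ∧
      Dense (↑(Submodule.span ℂ {v : H | ∃ a ∈ A, ∃ h : H, v = a (T h)}) : Set H)) →
      T ∈ unitary (H →L[ℂ] H) := by
    rintro ⟨hbij, hdense⟩
    -- the generating set lies in the range of T
    have hsub : {v : H | ∃ a ∈ A, ∃ h : H, v = a (T h)} ⊆ ((LinearMap.range (T : H →ₗ[ℂ] H) : Submodule ℂ H) : Set H) := by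
      rintro v ⟨a, haA, h, rfl⟩
      obtain ⟨b, hb⟩ := hbij.2 ⟨a, haA⟩
      have h1 := hα b
      have h2 : a (T h) = T ((b : H →L[ℂ] H) h) := by
        have : ((α b : ↥A) : H →L[ℂ] H) = a := by rw [hb]
        calc a (T h) = (((α b : ↥A) : H →L[ℂ] H) * T) h := by rw [this]; rfl
        _ = (T * (b : H →L[ℂ] H)) h := by rw [← h1]
        _ = T ((b : H →L[ℂ] H) h) := rfl
      rw [h2]
      exact LinearMap.mem_range_self _ _
    have hspan : Submodule.span ℂ {v : H | ∃ a ∈ A, ∃ h : H, v = a (T h)}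
        ≤ LinearMap.range (T : H →ₗ[ℂ] H) := Submodule.span_le.mpr hsub
    -- range T is closed
    have hisom : Isometry T := AddMonoidHomClass.isometry_of_norm T hnormT
    have hclosed : IsClosed ((LinearMap.range (T : H →ₗ[ℂ] H) : Submodule ℂ H) : Set H) := by
      rw [LinearMap.coe_range]
      exact hisom.isClosedEmbedding.isClosed_range
    -- T is surjective
    have hsurj : Function.Surjective T := by
      intro x
      have hx : x ∈ closure (↑(Submodule.span ℂ
          {v : H | ∃ a ∈ A, ∃ h : H, v = a (T h)}) : Set H) := by
        rw [hdense.closure_eq]; trivial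
      have : x ∈ closure ((LinearMap.range (T : H →ₗ[ℂ] H) : Submodule ℂ H) : Set H) :=
        closure_mono hspan hx
      rw [hclosed.closure_eq] at this
      exact this
    exact isometry_surj_unitary T hT hsurj
  -- (1) → (4)
  have key14 : T ∈ unitary (H →L[ℂ] H) →
      (fun b => adjoint T * b * T) '' (A : Set (H →L[ℂ] H)) = (A : Set (H →L[ℂ] H)) := by
    intro h
    apply Set.Subset.antisymm
    · rintro x ⟨b, hb, rfl⟩
      exact hA1 b hb
    · intro b hb
      refine ⟨((α ⟨b, hb⟩ : ↥A) : H →L[ℂ] H), (α ⟨b, hb⟩).2, ?_⟩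
      show adjoint T * ((α ⟨b, hb⟩ : ↥A) : H →L[ℂ] H) * T = b
      rw [mul_assoc, ← hα ⟨b, hb⟩, ← mul_assoc, hT, one_mul]
  refine ⟨⟨key12, key21⟩, ⟨key13, key31⟩, ⟨fun h => ⟨h, key14 h⟩, fun h => h.1⟩, ?_⟩
  intro hnT a ha
  exact hnT (hunit_isUnit (key21 ⟨a, ha⟩))
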